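/- Under the assumptions of the shrinkage setting (one-dimensional delay Hegselmann-Krause system with $\psi_{ij}(t) \ge \underline\psi > 0$ for $i \ne j$, $\sum_{j\ne i}\psi_{ij}(t) \le 1$, trajectories in $[m,M]$ with $0<m\le M$, delay $\tau>0$), suppose $x_j(t-\tau) \le (1 - e^{-6\tau}\gamma_-)M$ for all $j \ne L$ and all $t \in [2\tau, 6\tau]$, where $\gamma_- \in (0,1)$. Then for $t \in [3\tau, 6\tau]$, $x_L(t) \le [1 - (1 - e^{-\underline\psi\tau}) e^{-6\tau}\gamma_-] M$. -/
import Mathlib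


/-- Step 2 of the shrinkage argument: the lagging agent `L` inherits an improved upper bound
from all other agents after an additional time `τ`, degraded by the factor
`(1 - e^{-ψ̲ τ})`. -/
theorem HK_shrink_step2 (N : ℕ) (hN : 2 ≤ N) (τ ψlow m M γm : ℝ)
    (hτ : 0 < τ) (hψlow : 0 < ψlow) (hm : 0 < m) (hmM : m ≤ M)
    (hγm : γm ∈ Set.Ioo (0 : ℝ) 1)
    (x : Fin N → ℝ → ℝ) (ψw : Fin N → Fin N → ℝ → ℝ)
    (hlowb : ∀ i j : Fin N, i ≠ j → ∀ t : ℝ, 0 ≤ t → ψlow ≤ ψw i j t)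
    (hrow : ∀ (i : Fin N) (t : ℝ), 0 ≤ t → ∑ j ∈ Finset.univ.erase i, ψw i j t ≤ 1)
    (hconf : ∀ (i : Fin N) (t : ℝ), -τ ≤ t → m ≤ x i t ∧ x i t ≤ M)
    (hxcont : ∀ i, ContinuousOn (x i) (Set.Ici (-τ)))
    (hode : ∀ (i : Fin N) (t : ℝ), 0 < t → HasDerivAt (x i)
      (∑ j ∈ Finset.univ.erase i, ψw i j t * (x j (t - τ) - x i t)) t)
    (L : Fin N)
    (hothers : ∀ j : Fin N, j ≠ L → ∀ t ∈ Set.Icc (2 * τ) (6 * τ),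
      x j (t - τ) ≤ (1 - Real.exp (-(6 * τ)) * γm) * M) :
    ∀ t ∈ Set.Icc (3 * τ) (6 * τ),
      x L t ≤ (1 - (1 - Real.exp (-(ψlow * τ))) * Real.exp (-(6 * τ)) * γm) * M := by
  have hM : 0 < M := lt_of_lt_of_le hm hmM
  set κ : ℝ := (1 - Real.exp (-(6 * τ)) * γm) * M with hκdef
  set δ : ℝ := Real.exp (-(6 * τ)) * γm * M with hδdef
  obtain ⟨hγ0, hγ1⟩ := hγm
  have hδpos : 0 < δ := by positivity
  have hκδ : κ + δ = M := by simp [hκdef, hδdef]; ring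
  have hκM : κ ≤ M := by nlinarith
  -- the auxiliary function
  set h : ℝ → ℝ := fun t => max (x L t - κ) 0 with hhdef
  -- continuity of x L at points t > -τ
  have hxc : ∀ t : ℝ, -τ < t → ContinuousAt (x L) t := by
    intro t ht
    exact (hxcont L).continuousAt (Ici_mem_nhds ht)
  have hτ2 : (0:ℝ) < 2 * τ := by linarith
  -- the derivative bound when x L t ≥ κ
  have hderiv_bound : ∀ t : ℝ, t ∈ Set.Ico (2 * τ) (6 * τ) → κ ≤ x L t →
      (∑ j ∈ Finset.univ.erase L, ψw L j t * (x j (t - τ) - x L t)) ≤ -ψlow * (x L t - κ) := by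
    intro t ht hxκ
    have ht0 : (0:ℝ) < t := lt_of_lt_of_le hτ2 ht.1
    have htIcc : t ∈ Set.Icc (2 * τ) (6 * τ) := ⟨ht.1, le_of_lt ht.2⟩
    have h1 : (∑ j ∈ Finset.univ.erase L, ψw L j t * (x j (t - τ) - x L t)) ≤
        (∑ j ∈ Finset.univ.erase L, ψw L j t) * (κ - x L t) := by
      rw [Finset.sum_mul]
      apply Finset.sum_le_sum
      intro j hj
      have hjL : j ≠ L := (Finset.mem_erase.1 hj).1
      have hψpos : 0 ≤ ψw L j t := le_trans hψlow.le (hlowb L j (Ne.symm hjL) t ht0.le)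
      have := hothers j hjL t htIcc
      exact mul_le_mul_of_nonneg_left (by linarith) hψpos
    have h2 : ψlow ≤ ∑ j ∈ Finset.univ.erase L, ψw L j t := by
      obtain ⟨j0, hj0mem, hj0⟩ := Finset.exists_mem_ne
        (by simp [Finset.card_univ]; omega : 1 < (Finset.univ : Finset (Fin N)).card) L
      calc ψlow ≤ ψw L j0 t := hlowb L j0 (Ne.symm hj0) t ht0.le
        _ ≤ _ := Finset.single_le_sum
            (fun j hj => le_trans hψlow.le
              (hlowb L j (Ne.symm (Finset.mem_erase.1 hj).1) t ht0.le))
            (Finset.mem_erase.2 ⟨hj0, hj0mem⟩)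
    have h3 : (∑ j ∈ Finset.univ.erase L, ψw L j t) * (κ - x L t) ≤ ψlow * (κ - x L t) := by
      apply mul_le_mul_of_nonpos_right h2 (by linarith)
    calc _ ≤ _ := h1
      _ ≤ ψlow * (κ - x L t) := h3
      _ = -ψlow * (x L t - κ) := by ring
  -- apply the Grönwall-type lemma to h with K = -ψlow, ε = 0, δ = M - κ
  have hgron : ∀ t ∈ Set.Icc (2 * τ) (6 * τ),
      h t ≤ gronwallBound δ (-ψlow) 0 (t - 2 * τ) := by
    apply le_gronwallBound_of_liminf_deriv_right_le (f' := fun t => -ψlow * h t)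
    · -- continuity of h on the interval
      exact ((continuous_id.sub continuous_const).max continuous_const).comp_continuousOn
        ((hxcont L).mono (fun s hs => by
          simp only [Set.mem_Icc, Set.mem_Ici] at *; linarith [hs.1]))
    · -- the liminf slope condition
      intro t ht r hr
      have ht0 : (0:ℝ) < t := lt_of_lt_of_le hτ2 ht.1
      have hd := hode L t ht0
      have hslope := hasDerivAt_iff_tendsto_slope.1 hd
      rcases lt_trichotomy (x L t) κ with hlt | heq | hgt
      · -- x L t < κ : h is 0 near t
        have hht : h t = 0 := by simp [hhdef, max_eq_right, sub_nonpos.2 hlt.le]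
        have hr0 : 0 < r := by simpa [hht] using hr
        have hnear : ∀ᶠ z in nhds t, x L z < κ :=
          (hxc t (by linarith [ht.1])).eventually_lt continuousAt_const hlt
        apply Filter.Eventually.frequently
        filter_upwards [nhdsWithin_le_nhds hnear] with z hz
        have : h z = 0 := by simp [hhdef, max_eq_right, sub_nonpos.2 hz.le]
        simpa [this, hht] using hr0
      · -- x L t = κ
        have hht : h t = 0 := by simp [hhdef, heq]
        have hr0 : 0 < r := by simpa [hht] using hr
        have hdle : (∑ j ∈ Finset.univ.erase L, ψw L j t * (x j (t - τ) - x L t)) ≤ 0 := by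
          have := hderiv_bound t ht heq.ge
          simpa [heq] using this
        have hev : ∀ᶠ z in nhdsWithin t {t}ᶜ, slope (x L) t z < r :=
          hslope.eventually (Filter.Tendsto.eventually_lt_const (lt_of_le_of_lt hdle hr0)
            Filter.tendsto_id) |>.mono (fun z hz => hz)
        apply Filter.Eventually.frequently
        have hsub : nhdsWithin t (Set.Ioi t) ≤ nhdsWithin t {t}ᶜ :=
          nhdsWithin_mono t (fun z hz => ne_of_gt hz)
        filter_upwards [hsub hev, self_mem_nhdsWithin] with z hz hzt
        rw [Set.mem_Ioi] at hzt
        have hinv : 0 ≤ (z - t)⁻¹ := inv_nonneg.2 (by linarith)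
        have : (z - t)⁻¹ * (h z - h t) ≤ max ((z - t)⁻¹ * (x L z - x L t)) 0 := by
          rw [hht, sub_zero]
          rcases le_or_gt (x L z) κ with hc | hc
          · have : h z = 0 := by simp [hhdef, max_eq_right, sub_nonpos.2 hc]
            simp [this]
          · have : h z = x L z - κ := by simp [hhdef, max_eq_left, sub_nonneg.2 hc.le]
            rw [this]
            refine le_max_of_le_left ?_
            apply mul_le_mul_of_nonneg_left _ hinv
            rw [heq]
          
        apply lt_of_le_of_lt this
        apply max_lt _ hr0
        have : slope (x L) t z = (z - t)⁻¹ * (x L z - x L t) := by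
          rw [slope_def_field]; ring
        rw [← this]; exact hz
      · -- x L t > κ : h = x L - κ near t
        have hht : h t = x L t - κ := by simp [hhdef, max_eq_left, sub_nonneg.2 hgt.le]
        have hdle : (∑ j ∈ Finset.univ.erase L, ψw L j t * (x j (t - τ) - x L t)) < r := by
          have := hderiv_bound t ht hgt.le
          rw [hht] at hr; linarith
        have hev : ∀ᶠ z in nhdsWithin t {t}ᶜ, slope (x L) t z < r :=
          hslope.eventually (Filter.Tendsto.eventually_lt_const hdle Filter.tendsto_id)
        have hnear : ∀ᶠ z in nhds t, κ < x L z :=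
          (continuousAt_const.eventually_lt (hxc t (by linarith [ht.1])) hgt)
        apply Filter.Eventually.frequently
        have hsub : nhdsWithin t (Set.Ioi t) ≤ nhdsWithin t {t}ᶜ :=
          nhdsWithin_mono t (fun z hz => ne_of_gt hz)
        filter_upwards [hsub hev, nhdsWithin_le_nhds hnear] with z hz hzκ
        have hhz : h z = x L z - κ := by simp [hhdef, max_eq_left, sub_nonneg.2 hzκ.le]
        have : slope (x L) t z = (z - t)⁻¹ * (x L z - x L t) := by
          rw [slope_def_field]; ring
        rw [hhz, hht]
        calc (z - t)⁻¹ * (x L z - κ - (x L t - κ)) = (z - t)⁻¹ * (x L z - x L t) := by ring_nf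
          _ < r := by rw [← this]; exact hz
    · -- initial bound: h (2τ) ≤ δ
      have := (hconf L (2 * τ) (by linarith)).2
      simp only [hhdef]
      apply max_le (by linarith) hδpos.le
    · -- the bound f' ≤ K * f + ε
      intro t _; simp
  -- conclude
  intro t ht
  have htIcc : t ∈ Set.Icc (2 * τ) (6 * τ) := ⟨by linarith [ht.1], ht.2⟩
  have hg := hgron t htIcc
  rw [gronwallBound_ε0] at hg
  have hexp : Real.exp (-ψlow * (t - 2 * τ)) ≤ Real.exp (-(ψlow * τ)) := by
    apply Real.exp_le_exp.2
    nlinarith [ht.1]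
  have hhle : h t ≤ δ * Real.exp (-(ψlow * τ)) := by
    calc h t ≤ δ * Real.exp (-ψlow * (t - 2 * τ)) := hg
      _ ≤ δ * Real.exp (-(ψlow * τ)) := by
          apply mul_le_mul_of_nonneg_left hexp hδpos.le
  have hxh : x L t - κ ≤ h t := le_max_left _ _
  have : x L t ≤ κ + δ * Real.exp (-(ψlow * τ)) := by linarith
  calc x L t ≤ κ + δ * Real.exp (-(ψlow * τ)) := this
    _ = (1 - (1 - Real.exp (-(ψlow * τ))) * Real.exp (-(6 * τ)) * γm) * M := by
        simp only [hκdef, hδdef]; ring
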